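/- As α → 1, FGW_{α,p,q}(μ,ν) converges to GW_{pq}(μ_X, ν_Y)^q, the q-th power of the (pq)-Gromov–Wasserstein distance between the structure marginals. -/

import Mathlib

open MeasureTheory ENNReal Set

noncomputable section

/-- The set of couplings of two probability measures on `X × Ω` and `Y × Ω`. -/
def Couplings {X Y Ω : Type*} [MeasurableSpace X] [MeasurableSpace Y] [MeasurableSpace Ω]
    (μ : Measure (X × Ω)) (ν : Measure (Y × Ω)) : Set (Measure ((X × Ω) × (Y × Ω))) :=
  {π | π.map Prod.fst = μ ∧ π.map Prod.snd = ν}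

/-- The fused Gromov-Wasserstein cost of a coupling `π`, with trade-off `α` and
exponents `p, q`. Here `w.1.1, w.2.1` are the structure points `x, y` and
`w.1.2, w.2.2` the feature points `a, b`. -/
def fgwE {X Y Ω : Type*} [MetricSpace X] [MetricSpace Y] [MetricSpace Ω]
    [MeasurableSpace X] [MeasurableSpace Y] [MeasurableSpace Ω]
    (α p q : ℝ) (π : Measure ((X × Ω) × (Y × Ω))) : ℝ≥0∞ :=
  ∫⁻ w, (∫⁻ w', ENNReal.ofReal
      (((1 - α) * dist w.1.2 w.2.2 ^ q
        + α * |dist w.1.1 w'.1.1 - dist w.2.1 w'.2.1| ^ q) ^ p) ∂π) ∂π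

/-- The fused Gromov-Wasserstein distance. -/
def FGW {X Y Ω : Type*} [MetricSpace X] [MetricSpace Y] [MetricSpace Ω]
    [MeasurableSpace X] [MeasurableSpace Y] [MeasurableSpace Ω]
    (α p q : ℝ) (μ : Measure (X × Ω)) (ν : Measure (Y × Ω)) : ℝ≥0∞ :=
  (⨅ π ∈ Couplings μ ν, fgwE α p q π) ^ (1 / p)


/-- The `r`-Gromov-Wasserstein distance between measures on metric spaces `X` and `Y`. -/
def GW {X Y : Type*} [MetricSpace X] [MetricSpace Y]
    [MeasurableSpace X] [MeasurableSpace Y]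
    (r : ℝ) (μX : Measure X) (νY : Measure Y) : ℝ≥0∞ :=
  (⨅ γ ∈ {γ : Measure (X × Y) | γ.map Prod.fst = μX ∧ γ.map Prod.snd = νY},
    ∫⁻ z, (∫⁻ z', ENNReal.ofReal (|dist z.1 z'.1 - dist z.2 z'.2| ^ r) ∂γ) ∂γ) ^ (1 / r)

section Auxiliary
open ProbabilityTheory

lemma aux_sum_pow {p : ℕ} {x h M : ℝ} (hx : 0 ≤ x) (hh : 0 ≤ h) (hxM : x ≤ M) (hhM : h ≤ M) :
    (x + h) ^ p ≤ x ^ p + 2 ^ p * M ^ (p - 1) * h := by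
  have hM : 0 ≤ M := hx.trans hxM
  rw [add_pow, Finset.sum_range_succ]
  simp only [Nat.choose_self, Nat.sub_self, pow_zero, mul_one, Nat.cast_one]
  have hsum : ∑ k ∈ Finset.range p, (p.choose k : ℝ) ≤ 2 ^ p := by
    have h3 : ∑ k ∈ Finset.range p, p.choose k ≤ ∑ k ∈ Finset.range (p + 1), p.choose k :=
      Finset.sum_le_sum_of_subset (Finset.range_subset_range.mpr (Nat.le_succ p))
    rw [Nat.sum_range_choose] at h3
    calc (∑ k ∈ Finset.range p, (p.choose k : ℝ))
        = ((∑ k ∈ Finset.range p, p.choose k : ℕ) : ℝ) := by push_cast; rfl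
      _ ≤ ((2 ^ p : ℕ) : ℝ) := by exact_mod_cast h3
      _ = (2 : ℝ) ^ p := by push_cast; ring
  have key : ∑ k ∈ Finset.range p, x ^ k * h ^ (p - k) * (p.choose k : ℝ)
      ≤ 2 ^ p * M ^ (p - 1) * h := by
    calc ∑ k ∈ Finset.range p, x ^ k * h ^ (p - k) * (p.choose k : ℝ)
        ≤ ∑ k ∈ Finset.range p, M ^ (p - 1) * h * (p.choose k : ℝ) := by
          refine Finset.sum_le_sum fun k hk => ?_
          have hk' := Finset.mem_range.mp hk
          have h1 : x ^ k * h ^ (p - k) = x ^ k * h ^ (p - k - 1) * h := by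
            rw [mul_assoc, ← pow_succ]
            congr 2
            omega
          have h2 : x ^ k * h ^ (p - k - 1) ≤ M ^ (p - 1) := by
            calc x ^ k * h ^ (p - k - 1) ≤ M ^ k * M ^ (p - k - 1) :=
                  mul_le_mul (pow_le_pow_left₀ hx hxM k) (pow_le_pow_left₀ hh hhM _)
                    (pow_nonneg hh _) (pow_nonneg hM _)
              _ = M ^ (p - 1) := by rw [← pow_add]; congr 1; omega
          rw [h1]
          exact mul_le_mul_of_nonneg_right (mul_le_mul_of_nonneg_right h2 hh)
            (by positivity : (0:ℝ) ≤ (p.choose k : ℝ))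
      _ = M ^ (p - 1) * h * ∑ k ∈ Finset.range p, (p.choose k : ℝ) := by rw [Finset.mul_sum]
      _ ≤ M ^ (p - 1) * h * 2 ^ p := mul_le_mul_of_nonneg_left hsum (by positivity)
      _ = 2 ^ p * M ^ (p - 1) * h := by ring
  linarith

lemma ptwise_up {p : ℕ} {α A B M Am : ℝ} (hα0 : 0 ≤ α) (hα1 : α ≤ 1)
    (hA0 : 0 ≤ A) (hB0 : 0 ≤ B) (hAm : A ≤ Am) (hAM : Am ≤ M) (hBM : B ≤ M) :
    ((1 - α) * A + α * B) ^ p ≤ B ^ p + (1 - α) * (2 ^ p * M ^ (p - 1) * Am) := by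
  have hM : 0 ≤ M := (hA0.trans hAm).trans hAM
  have key := aux_sum_pow (p := p) (x := α * B) (h := (1 - α) * A) (M := M)
    (mul_nonneg hα0 hB0) (mul_nonneg (by linarith) hA0)
    (by nlinarith) (by nlinarith)
  have h1 : (1 - α) * A + α * B = α * B + (1 - α) * A := by ring
  have h2 : (α * B) ^ p ≤ B ^ p := pow_le_pow_left₀ (mul_nonneg hα0 hB0) (by nlinarith) p
  have h3 : 2 ^ p * M ^ (p - 1) * ((1 - α) * A) ≤ (1 - α) * (2 ^ p * M ^ (p - 1) * Am) := by
    calc 2 ^ p * M ^ (p - 1) * ((1 - α) * A) = (1 - α) * (2 ^ p * M ^ (p - 1) * A) := by ring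
      _ ≤ (1 - α) * (2 ^ p * M ^ (p - 1) * Am) := by
          refine mul_le_mul_of_nonneg_left ?_ (by linarith)
          exact mul_le_mul_of_nonneg_left hAm (by positivity)
  rw [h1]
  linarith

lemma ptwise_low {p : ℕ} {α A B : ℝ} (hα0 : 0 ≤ α) (hα1 : α ≤ 1) (hA0 : 0 ≤ A) (hB0 : 0 ≤ B) :
    α ^ p * B ^ p ≤ ((1 - α) * A + α * B) ^ p := by
  rw [← mul_pow]
  refine pow_le_pow_left₀ (mul_nonneg hα0 hB0) (by nlinarith) p

/-- The structure projection from a pair coupling space. -/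
def gproj {X Y Ω : Type*} : (X × Ω) × (Y × Ω) → X × Y := fun w => (w.1.1, w.2.1)

lemma gproj_measurable {X Y Ω : Type*} [MeasurableSpace X] [MeasurableSpace Y]
    [MeasurableSpace Ω] : Measurable (gproj (X := X) (Y := Y) (Ω := Ω)) :=
  (measurable_fst.fst).prodMk (measurable_snd.fst)

/-- The Gromov–Wasserstein integrand kernel. -/
def Fk {X Y : Type*} [MetricSpace X] [MetricSpace Y] (r : ℝ) : X × Y → X × Y → ℝ≥0∞ :=
  fun z z' => ENNReal.ofReal (|dist z.1 z'.1 - dist z.2 z'.2| ^ r)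

lemma Fk_measurable {X Y : Type*} [MetricSpace X] [MetricSpace Y]
    [SecondCountableTopology X] [SecondCountableTopology Y] [MeasurableSpace X]
    [BorelSpace X] [MeasurableSpace Y] [BorelSpace Y] {r : ℝ} (hr : 0 ≤ r) :
    Measurable (Function.uncurry (Fk (X := X) (Y := Y) r)) := by
  have hc : Continuous fun x : ℝ => x ^ r := by
    rw [continuous_iff_continuousAt]
    intro x
    exact Real.continuousAt_rpow_const x r (Or.inr hr)
  have hd : Continuous fun z : (X × Y) × (X × Y) => dist z.1.1 z.2.1 - dist z.1.2 z.2.2 := by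
    fun_prop
  exact (ENNReal.continuous_ofReal.comp (hc.comp (continuous_abs.comp hd))).measurable

/-- Change of variables for the double integral. -/
lemma I2_eq {A B : Type*} [MeasurableSpace A] [MeasurableSpace B]
    (π : Measure A) [IsProbabilityMeasure π] (g : A → B) (hg : Measurable g)
    (F : B → B → ℝ≥0∞) (hF : Measurable (Function.uncurry F)) :
    ∫⁻ w, ∫⁻ w', F (g w) (g w') ∂π ∂π = ∫⁻ z, ∫⁻ z', F z z' ∂(π.map g) ∂(π.map g) := by
  haveI : IsProbabilityMeasure (π.map g) := Measure.isProbabilityMeasure_map hg.aemeasurable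
  have h1 : ∀ z : B, Measurable (F z) := fun z => hF.comp measurable_prodMk_left
  have hFm : Measurable fun z => ∫⁻ z', F z z' ∂(π.map g) :=
    Measurable.lintegral_prod_right hF
  calc ∫⁻ w, ∫⁻ w', F (g w) (g w') ∂π ∂π
      = ∫⁻ w, ∫⁻ z', F (g w) z' ∂(π.map g) ∂π :=
        lintegral_congr fun w => (lintegral_map (h1 (g w)) hg).symm
    _ = ∫⁻ z, ∫⁻ z', F z z' ∂(π.map g) ∂(π.map g) := (lintegral_map hFm hg).symm

lemma coupling_prob {X Y Ω : Type*} [MeasurableSpace X] [MeasurableSpace Y] [MeasurableSpace Ω]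
    {μ : Measure (X × Ω)} {ν : Measure (Y × Ω)} [IsProbabilityMeasure μ]
    {π : Measure ((X × Ω) × (Y × Ω))} (hπ : π ∈ Couplings μ ν) : IsProbabilityMeasure π := by
  constructor
  have h : π.map Prod.fst Set.univ = 1 := by rw [hπ.1]; exact measure_univ
  rwa [Measure.map_apply measurable_fst MeasurableSet.univ, Set.preimage_univ] at h

lemma proj_mem {X Y Ω : Type*} [MeasurableSpace X] [MeasurableSpace Y] [MeasurableSpace Ω]
    {μ : Measure (X × Ω)} {ν : Measure (Y × Ω)}
    {π : Measure ((X × Ω) × (Y × Ω))} (hπ : π ∈ Couplings μ ν) :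
    (π.map gproj) ∈
      {γ : Measure (X × Y) | γ.map Prod.fst = μ.map Prod.fst ∧ γ.map Prod.snd = ν.map Prod.fst} := by
  constructor
  · rw [Measure.map_map measurable_fst gproj_measurable]
    have he : (Prod.fst ∘ gproj (X := X) (Y := Y) (Ω := Ω))
        = Prod.fst ∘ (Prod.fst : (X × Ω) × (Y × Ω) → X × Ω) := rfl
    rw [he, ← Measure.map_map measurable_fst measurable_fst, hπ.1]
  · rw [Measure.map_map measurable_snd gproj_measurable]
    have he : (Prod.snd ∘ gproj (X := X) (Y := Y) (Ω := Ω))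
        = Prod.fst ∘ (Prod.snd : (X × Ω) × (Y × Ω) → Y × Ω) := rfl
    rw [he, ← Measure.map_map measurable_fst measurable_snd, hπ.2]

/-- Gluing: lift a coupling of the structure marginals to a coupling of `μ` and `ν`. -/
lemma glue_lemma {X Y Ω : Type*}
    [MeasurableSpace X] [MeasurableSpace Y]
    [MetricSpace Ω] [CompactSpace Ω] [MeasurableSpace Ω] [BorelSpace Ω]
    (μ : Measure (X × Ω)) (ν : Measure (Y × Ω))
    [IsProbabilityMeasure μ] [IsProbabilityMeasure ν]
    (γ : Measure (X × Y)) [IsProbabilityMeasure γ]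
    (h1 : γ.map Prod.fst = μ.map Prod.fst) (h2 : γ.map Prod.snd = ν.map Prod.fst) :
    ∃ π : Measure ((X × Ω) × (Y × Ω)), π ∈ Couplings μ ν ∧ π.map gproj = γ := by
  haveI : Nonempty (X × Ω) := by
    by_contra hne
    rw [not_nonempty_iff] at hne
    have h := measure_univ (μ := μ)
    simp [Set.univ_eq_empty_iff.mpr hne] at h
  haveI : Nonempty Ω := ⟨(Classical.arbitrary (X × Ω)).2⟩
  set κ : Kernel X Ω := μ.condKernel with hκ
  set η : Kernel Y Ω := ν.condKernel with hη
  set ξ : Kernel (X × Y) (Ω × Ω) :=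
    (κ.comap Prod.fst measurable_fst).prod (η.comap Prod.snd measurable_snd) with hξ
  set π₀ : Measure ((X × Y) × (Ω × Ω)) := γ.compProd ξ with hπ₀
  have he : Measurable fun z : (X × Y) × (Ω × Ω) => ((z.1.1, z.2.1), (z.1.2, z.2.2)) := by
    fun_prop
  have hg1 : Measurable fun z : (X × Y) × (Ω × Ω) => (z.1.1, z.2.1) := by fun_prop
  have hg2 : Measurable fun z : (X × Y) × (Ω × Ω) => (z.1.2, z.2.2) := by fun_prop
  refine ⟨π₀.map fun z => ((z.1.1, z.2.1), (z.1.2, z.2.2)), ⟨?_, ?_⟩, ?_⟩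
  · -- first marginal is μ
    rw [Measure.map_map measurable_fst he]
    have hc : (Prod.fst ∘ fun z : (X × Y) × (Ω × Ω) => ((z.1.1, z.2.1), (z.1.2, z.2.2)))
        = fun z : (X × Y) × (Ω × Ω) => (z.1.1, z.2.1) := rfl
    rw [hc]
    ext s hs
    rw [Measure.map_apply hg1 hs, Measure.compProd_apply (hg1 hs)]
    have hval : ∀ xy : X × Y, ξ xy (Prod.mk xy ⁻¹' ((fun z : (X × Y) × (Ω × Ω) => (z.1.1, z.2.1)) ⁻¹' s))
        = κ xy.1 (Prod.mk xy.1 ⁻¹' s) := by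
      intro xy
      have hsec : (Prod.mk xy ⁻¹' ((fun z : (X × Y) × (Ω × Ω) => (z.1.1, z.2.1)) ⁻¹' s))
          = (Prod.mk xy.1 ⁻¹' s) ×ˢ (Set.univ : Set Ω) := by
        ext ab
        simp [Set.mem_prod]
      rw [hsec, hξ, Kernel.prod_apply, Kernel.comap_apply, Kernel.comap_apply,
        Measure.prod_prod, measure_univ, mul_one]
    simp_rw [hval]
    have hmeas : Measurable fun x : X => κ x (Prod.mk x ⁻¹' s) :=
      Kernel.measurable_kernel_prodMk_left hs
    calc ∫⁻ xy : X × Y, κ xy.1 (Prod.mk xy.1 ⁻¹' s) ∂γ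
        = ∫⁻ x, κ x (Prod.mk x ⁻¹' s) ∂(γ.map Prod.fst) := (lintegral_map hmeas measurable_fst).symm
      _ = ∫⁻ x, κ x (Prod.mk x ⁻¹' s) ∂μ.fst := by rw [h1]; rfl
      _ = (μ.fst ⊗ₘ κ) s := (Measure.compProd_apply hs).symm
      _ = μ s := by rw [hκ, μ.disintegrate μ.condKernel]
  · -- second marginal is ν
    rw [Measure.map_map measurable_snd he]
    have hc : (Prod.snd ∘ fun z : (X × Y) × (Ω × Ω) => ((z.1.1, z.2.1), (z.1.2, z.2.2)))
        = fun z : (X × Y) × (Ω × Ω) => (z.1.2, z.2.2) := rfl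
    rw [hc]
    ext s hs
    rw [Measure.map_apply hg2 hs, Measure.compProd_apply (hg2 hs)]
    have hval : ∀ xy : X × Y, ξ xy (Prod.mk xy ⁻¹' ((fun z : (X × Y) × (Ω × Ω) => (z.1.2, z.2.2)) ⁻¹' s))
        = η xy.2 (Prod.mk xy.2 ⁻¹' s) := by
      intro xy
      have hsec : (Prod.mk xy ⁻¹' ((fun z : (X × Y) × (Ω × Ω) => (z.1.2, z.2.2)) ⁻¹' s))
          = (Set.univ : Set Ω) ×ˢ (Prod.mk xy.2 ⁻¹' s) := by
        ext ab
        simp [Set.mem_prod]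
      rw [hsec, hξ, Kernel.prod_apply, Kernel.comap_apply, Kernel.comap_apply,
        Measure.prod_prod, measure_univ, one_mul]
    simp_rw [hval]
    have hmeas : Measurable fun y : Y => η y (Prod.mk y ⁻¹' s) :=
      Kernel.measurable_kernel_prodMk_left hs
    calc ∫⁻ xy : X × Y, η xy.2 (Prod.mk xy.2 ⁻¹' s) ∂γ
        = ∫⁻ y, η y (Prod.mk y ⁻¹' s) ∂(γ.map Prod.snd) := (lintegral_map hmeas measurable_snd).symm
      _ = ∫⁻ y, η y (Prod.mk y ⁻¹' s) ∂ν.fst := by rw [h2]; rfl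
      _ = (ν.fst ⊗ₘ η) s := (Measure.compProd_apply hs).symm
      _ = ν s := by rw [hη, ν.disintegrate ν.condKernel]
  · -- structure marginal is γ
    rw [Measure.map_map gproj_measurable he]
    have hc : (gproj (X := X) (Y := Y) (Ω := Ω) ∘
        fun z : (X × Y) × (Ω × Ω) => ((z.1.1, z.2.1), (z.1.2, z.2.2)))
        = (Prod.fst : (X × Y) × (Ω × Ω) → X × Y) := rfl
    rw [hc]
    have hfst : π₀.map Prod.fst = π₀.fst := rfl
    rw [hfst, hπ₀, Measure.fst_compProd]

end Auxiliary

/-- Main convergence of the infimum of FGW costs. -/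
lemma main_conv {X Y Ω : Type*} [MetricSpace X] [MetricSpace Y] [MetricSpace Ω]
    [CompactSpace X] [CompactSpace Y] [CompactSpace Ω]
    [MeasurableSpace X] [BorelSpace X] [MeasurableSpace Y] [BorelSpace Y]
    [MeasurableSpace Ω] [BorelSpace Ω]
    (μ : Measure (X × Ω)) (ν : Measure (Y × Ω))
    [IsProbabilityMeasure μ] [IsProbabilityMeasure ν]
    (p : ℕ) (hp : 1 ≤ p) (q : ℝ) (hq : 1 ≤ q) :
    Filter.Tendsto (fun α : ℝ => ⨅ π ∈ Couplings μ ν, fgwE α (p : ℝ) q π)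
      (nhdsWithin 1 (Set.Ioo (0 : ℝ) 1))
      (nhds (⨅ γ ∈ {γ : Measure (X × Y) |
          γ.map Prod.fst = μ.map Prod.fst ∧ γ.map Prod.snd = ν.map Prod.fst},
        ∫⁻ z, (∫⁻ z', Fk ((p : ℝ) * q) z z' ∂γ) ∂γ)) := by
  have hq0 : (0:ℝ) < q := lt_of_lt_of_le one_pos hq
  set r : ℝ := (p : ℝ) * q with hr
  have hr0 : (0:ℝ) ≤ r := by positivity
  set S : Set (Measure (X × Y)) :=
    {γ | γ.map Prod.fst = μ.map Prod.fst ∧ γ.map Prod.snd = ν.map Prod.fst} with hS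
  set L : ℝ≥0∞ := ⨅ γ ∈ S, ∫⁻ z, (∫⁻ z', Fk r z z' ∂γ) ∂γ with hL
  have hFm : Measurable (Function.uncurry (Fk (X := X) (Y := Y) r)) := Fk_measurable hr0
  -- constants
  set CX : ℝ := Metric.diam (Set.univ : Set X) with hCX
  set CY : ℝ := Metric.diam (Set.univ : Set Y) with hCY
  set CO : ℝ := Metric.diam (Set.univ : Set Ω) with hCO
  set Am : ℝ := CO ^ q with hAmdef
  set Bm : ℝ := (CX + CY) ^ q with hBmdef
  set M : ℝ := max Am Bm with hMdef
  set K : ℝ := 2 ^ p * M ^ (p - 1) * Am with hKdef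
  have hAm0 : 0 ≤ Am := Real.rpow_nonneg Metric.diam_nonneg q
  have hBm0 : 0 ≤ Bm := Real.rpow_nonneg (by positivity) q
  have hM0 : 0 ≤ M := hAm0.trans (le_max_left _ _)
  have hK0 : 0 ≤ K := mul_nonneg (mul_nonneg (by positivity) (pow_nonneg hM0 _)) hAm0
  have hdistB : ∀ w w' : (X × Ω) × (Y × Ω),
      |dist w.1.1 w'.1.1 - dist w.2.1 w'.2.1| ≤ CX + CY := by
    intro w w'
    have h1 : dist w.1.1 w'.1.1 ≤ CX :=
      Metric.dist_le_diam_of_mem isCompact_univ.isBounded trivial trivial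
    have h2 : dist w.2.1 w'.2.1 ≤ CY :=
      Metric.dist_le_diam_of_mem isCompact_univ.isBounded trivial trivial
    have h3 : (0:ℝ) ≤ dist w.1.1 w'.1.1 := dist_nonneg
    have h4 : (0:ℝ) ≤ dist w.2.1 w'.2.1 := dist_nonneg
    have h5 : (0:ℝ) ≤ CX := Metric.diam_nonneg
    have h6 : (0:ℝ) ≤ CY := Metric.diam_nonneg
    rw [abs_le]
    constructor <;> linarith
  have hBr : ∀ w w' : (X × Ω) × (Y × Ω),
      (|dist w.1.1 w'.1.1 - dist w.2.1 w'.2.1| ^ q) ^ p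
        = |dist w.1.1 w'.1.1 - dist w.2.1 w'.2.1| ^ r := by
    intro w w'
    rw [← Real.rpow_natCast (|dist w.1.1 w'.1.1 - dist w.2.1 w'.2.1| ^ q) p,
      ← Real.rpow_mul (abs_nonneg _), hr, mul_comm q (p:ℝ)]
  -- upper bound on the cost of any coupling
  have bound_up : ∀ α : ℝ, α ∈ Set.Ioo (0:ℝ) 1 → ∀ π : Measure ((X × Ω) × (Y × Ω)),
      IsProbabilityMeasure π →
      fgwE α (p : ℝ) q π ≤ (∫⁻ w, ∫⁻ w', Fk r (gproj w) (gproj w') ∂π ∂π)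
        + ENNReal.ofReal ((1 - α) * K) := by
    intro α hα π hπ
    haveI := hπ
    have hpt : ∀ w w' : (X × Ω) × (Y × Ω),
        ENNReal.ofReal (((1 - α) * dist w.1.2 w.2.2 ^ q
          + α * |dist w.1.1 w'.1.1 - dist w.2.1 w'.2.1| ^ q) ^ (p : ℝ))
        ≤ Fk r (gproj w) (gproj w') + ENNReal.ofReal ((1 - α) * K) := by
      intro w w'
      have hA0 : 0 ≤ dist w.1.2 w.2.2 ^ q := Real.rpow_nonneg dist_nonneg q
      have hB0 : 0 ≤ |dist w.1.1 w'.1.1 - dist w.2.1 w'.2.1| ^ q :=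
        Real.rpow_nonneg (abs_nonneg _) q
      have hAm' : dist w.1.2 w.2.2 ^ q ≤ Am :=
        Real.rpow_le_rpow dist_nonneg
          (Metric.dist_le_diam_of_mem isCompact_univ.isBounded trivial trivial) hq0.le
      have hBm' : |dist w.1.1 w'.1.1 - dist w.2.1 w'.2.1| ^ q ≤ Bm :=
        Real.rpow_le_rpow (abs_nonneg _) (hdistB w w') hq0.le
      have key := ptwise_up (p := p) hα.1.le hα.2.le hA0 hB0 hAm' (le_max_left _ _)
        (hBm'.trans (le_max_right _ _))
      calc ENNReal.ofReal (((1 - α) * dist w.1.2 w.2.2 ^ q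
            + α * |dist w.1.1 w'.1.1 - dist w.2.1 w'.2.1| ^ q) ^ (p : ℝ))
          = ENNReal.ofReal (((1 - α) * dist w.1.2 w.2.2 ^ q
            + α * |dist w.1.1 w'.1.1 - dist w.2.1 w'.2.1| ^ q) ^ p) := by
            rw [Real.rpow_natCast]
        _ ≤ ENNReal.ofReal ((|dist w.1.1 w'.1.1 - dist w.2.1 w'.2.1| ^ q) ^ p + (1 - α) * K) :=
            ENNReal.ofReal_le_ofReal key
        _ ≤ ENNReal.ofReal ((|dist w.1.1 w'.1.1 - dist w.2.1 w'.2.1| ^ q) ^ p)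
            + ENNReal.ofReal ((1 - α) * K) := ENNReal.ofReal_add_le
        _ = Fk r (gproj w) (gproj w') + ENNReal.ofReal ((1 - α) * K) := by
            rw [hBr w w']
            rfl
    calc fgwE α (p : ℝ) q π
        ≤ ∫⁻ w, ∫⁻ w', (Fk r (gproj w) (gproj w') + ENNReal.ofReal ((1 - α) * K)) ∂π ∂π :=
          lintegral_mono fun w => lintegral_mono fun w' => hpt w w'
      _ = (∫⁻ w, ∫⁻ w', Fk r (gproj w) (gproj w') ∂π ∂π) + ENNReal.ofReal ((1 - α) * K) := by
          have hstep : ∀ w : (X × Ω) × (Y × Ω),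
              ∫⁻ w', (Fk r (gproj w) (gproj w') + ENNReal.ofReal ((1 - α) * K)) ∂π
              = (∫⁻ w', Fk r (gproj w) (gproj w') ∂π) + ENNReal.ofReal ((1 - α) * K) := by
            intro w
            rw [lintegral_add_right _ measurable_const, lintegral_const, measure_univ, mul_one]
          simp_rw [hstep]
          rw [lintegral_add_right _ measurable_const, lintegral_const, measure_univ, mul_one]
  -- lower bound on the cost of any coupling
  have bound_low : ∀ α : ℝ, α ∈ Set.Ioo (0:ℝ) 1 → ∀ π : Measure ((X × Ω) × (Y × Ω)),
      IsProbabilityMeasure π →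
      ENNReal.ofReal (α ^ p) * (∫⁻ w, ∫⁻ w', Fk r (gproj w) (gproj w') ∂π ∂π)
        ≤ fgwE α (p : ℝ) q π := by
    intro α hα π hπ
    haveI := hπ
    have hpt : ∀ w w' : (X × Ω) × (Y × Ω),
        ENNReal.ofReal (α ^ p) * Fk r (gproj w) (gproj w')
        ≤ ENNReal.ofReal (((1 - α) * dist w.1.2 w.2.2 ^ q
          + α * |dist w.1.1 w'.1.1 - dist w.2.1 w'.2.1| ^ q) ^ (p : ℝ)) := by
      intro w w'
      have hA0 : 0 ≤ dist w.1.2 w.2.2 ^ q := Real.rpow_nonneg dist_nonneg q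
      have hB0 : 0 ≤ |dist w.1.1 w'.1.1 - dist w.2.1 w'.2.1| ^ q :=
        Real.rpow_nonneg (abs_nonneg _) q
      have key := ptwise_low (p := p) (A := dist w.1.2 w.2.2 ^ q) hα.1.le hα.2.le hA0 hB0
      calc ENNReal.ofReal (α ^ p) * Fk r (gproj w) (gproj w')
          = ENNReal.ofReal (α ^ p * (|dist w.1.1 w'.1.1 - dist w.2.1 w'.2.1| ^ q) ^ p) := by
            rw [ENNReal.ofReal_mul (pow_nonneg hα.1.le p), hBr w w']
            rfl
        _ ≤ ENNReal.ofReal (((1 - α) * dist w.1.2 w.2.2 ^ q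
            + α * |dist w.1.1 w'.1.1 - dist w.2.1 w'.2.1| ^ q) ^ p) :=
            ENNReal.ofReal_le_ofReal key
        _ = ENNReal.ofReal (((1 - α) * dist w.1.2 w.2.2 ^ q
            + α * |dist w.1.1 w'.1.1 - dist w.2.1 w'.2.1| ^ q) ^ (p : ℝ)) := by
            rw [Real.rpow_natCast]
    calc ENNReal.ofReal (α ^ p) * (∫⁻ w, ∫⁻ w', Fk r (gproj w) (gproj w') ∂π ∂π)
        = ∫⁻ w, ENNReal.ofReal (α ^ p) * ∫⁻ w', Fk r (gproj w) (gproj w') ∂π ∂π :=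
          (lintegral_const_mul' _ _ ENNReal.ofReal_ne_top).symm
      _ = ∫⁻ w, ∫⁻ w', ENNReal.ofReal (α ^ p) * Fk r (gproj w) (gproj w') ∂π ∂π :=
          lintegral_congr fun w => (lintegral_const_mul' _ _ ENNReal.ofReal_ne_top).symm
      _ ≤ fgwE α (p : ℝ) q π := lintegral_mono fun w => lintegral_mono fun w' => hpt w w'
  -- lower bound for the infimum
  have lower_bound : ∀ α : ℝ, α ∈ Set.Ioo (0:ℝ) 1 →
      ENNReal.ofReal (α ^ p) * L ≤ ⨅ π ∈ Couplings μ ν, fgwE α (p : ℝ) q π := by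
    intro α hα
    refine le_iInf₂ fun π hπ => ?_
    haveI hπP : IsProbabilityMeasure π := coupling_prob hπ
    calc ENNReal.ofReal (α ^ p) * L
        ≤ ENNReal.ofReal (α ^ p) *
            (∫⁻ z, (∫⁻ z', Fk r z z' ∂(π.map gproj)) ∂(π.map gproj)) := by
          refine mul_le_mul_right ?_ _
          exact iInf₂_le _ (proj_mem hπ)
      _ = ENNReal.ofReal (α ^ p) * (∫⁻ w, ∫⁻ w', Fk r (gproj w) (gproj w') ∂π ∂π) := by
          rw [I2_eq π gproj gproj_measurable (Fk r) hFm]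
      _ ≤ fgwE α (p : ℝ) q π := bound_low α hα π hπP
  rw [tendsto_order]
  constructor
  · -- lower part
    intro c hc
    have h1 : Filter.Tendsto (fun α : ℝ => ENNReal.ofReal (α ^ p))
        (nhdsWithin 1 (Set.Ioo (0:ℝ) 1)) (nhds 1) := by
      have hcont : Continuous fun α : ℝ => ENNReal.ofReal (α ^ p) :=
        ENNReal.continuous_ofReal.comp (continuous_pow p)
      have h := (hcont.tendsto 1).mono_left (nhdsWithin_le_nhds (s := Set.Ioo (0:ℝ) 1))
      simpa using h
    have h2 : Filter.Tendsto (fun α : ℝ => ENNReal.ofReal (α ^ p) * L)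
        (nhdsWithin 1 (Set.Ioo (0:ℝ) 1)) (nhds L) := by
      have h := ENNReal.Tendsto.mul_const (b := L) h1 (Or.inl one_ne_zero)
      simpa using h
    filter_upwards [h2.eventually (eventually_gt_nhds hc), self_mem_nhdsWithin] with α hαc hα
    exact lt_of_lt_of_le hαc (lower_bound α hα)
  · -- upper part
    intro c hc
    obtain ⟨m, hm1, hm2⟩ := exists_between hc
    have hLm : L < m := hm1
    rw [hL] at hLm
    obtain ⟨γ, hγ⟩ := iInf_lt_iff.mp hLm
    obtain ⟨hγS, hγm⟩ := iInf_lt_iff.mp hγ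
    haveI hγP : IsProbabilityMeasure γ := by
      constructor
      have h : γ.map Prod.fst Set.univ = 1 := by
        rw [hγS.1, Measure.map_apply measurable_fst MeasurableSet.univ, Set.preimage_univ]
        exact measure_univ
      rwa [Measure.map_apply measurable_fst MeasurableSet.univ, Set.preimage_univ] at h
    obtain ⟨π, hπC, hπg⟩ := glue_lemma μ ν γ hγS.1 hγS.2
    haveI hπP : IsProbabilityMeasure π := coupling_prob hπC
    have hub : ∀ α : ℝ, α ∈ Set.Ioo (0:ℝ) 1 →
        (⨅ π' ∈ Couplings μ ν, fgwE α (p : ℝ) q π')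
          ≤ (∫⁻ z, (∫⁻ z', Fk r z z' ∂γ) ∂γ) + ENNReal.ofReal ((1 - α) * K) := by
      intro α hα
      refine le_trans (iInf₂_le π hπC) ?_
      refine le_trans (bound_up α hα π hπP) ?_
      rw [I2_eq π gproj gproj_measurable (Fk r) hFm, hπg]
    have h3 : Filter.Tendsto
        (fun α : ℝ => (∫⁻ z, (∫⁻ z', Fk r z z' ∂γ) ∂γ) + ENNReal.ofReal ((1 - α) * K))
        (nhdsWithin 1 (Set.Ioo (0:ℝ) 1)) (nhds (∫⁻ z, (∫⁻ z', Fk r z z' ∂γ) ∂γ)) := by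
      have h0 : Filter.Tendsto (fun α : ℝ => ENNReal.ofReal ((1 - α) * K))
          (nhdsWithin 1 (Set.Ioo (0:ℝ) 1)) (nhds 0) := by
        have hcont : Continuous fun α : ℝ => ENNReal.ofReal ((1 - α) * K) :=
          ENNReal.continuous_ofReal.comp (by fun_prop)
        have h := (hcont.tendsto 1).mono_left (nhdsWithin_le_nhds (s := Set.Ioo (0:ℝ) 1))
        simpa using h
      have h := h0.const_add (∫⁻ z, (∫⁻ z', Fk r z z' ∂γ) ∂γ)
      simpa using h
    have hIc : (∫⁻ z, (∫⁻ z', Fk r z z' ∂γ) ∂γ) < c := lt_trans hγm hm2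
    filter_upwards [h3.eventually (eventually_lt_nhds hIc), self_mem_nhdsWithin] with α hαc hα
    exact lt_of_le_of_lt (hub α hα) hαc

theorem stmt16 {X Y Ω : Type*} [MetricSpace X] [MetricSpace Y] [MetricSpace Ω]
    [CompactSpace X] [CompactSpace Y] [CompactSpace Ω]
    [MeasurableSpace X] [BorelSpace X] [MeasurableSpace Y] [BorelSpace Y]
    [MeasurableSpace Ω] [BorelSpace Ω]
    (μ : Measure (X × Ω)) (ν : Measure (Y × Ω))
    [IsProbabilityMeasure μ] [IsProbabilityMeasure ν]
    (p : ℕ) (hp : 1 ≤ p) (q : ℝ) (hq : 1 ≤ q) :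
    Filter.Tendsto (fun α : ℝ => FGW α (p : ℝ) q μ ν)
      (nhdsWithin 1 (Set.Ioo (0 : ℝ) 1))
      (nhds ((GW ((p : ℝ) * q) (μ.map Prod.fst) (ν.map Prod.fst)) ^ q)) := by
  have hq0 : (0:ℝ) < q := lt_of_lt_of_le one_pos hq
  have hp0 : (0:ℝ) < (p : ℝ) := by
    have h0 : 0 < p := hp
    exact_mod_cast h0
  have h := main_conv μ ν p hp q hq
  have h2 : Filter.Tendsto
      (fun α : ℝ => (⨅ π ∈ Couplings μ ν, fgwE α (p : ℝ) q π) ^ (1 / (p : ℝ)))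
      (nhdsWithin 1 (Set.Ioo (0:ℝ) 1))
      (nhds ((⨅ γ ∈ {γ : Measure (X × Y) |
          γ.map Prod.fst = μ.map Prod.fst ∧ γ.map Prod.snd = ν.map Prod.fst},
        ∫⁻ z, (∫⁻ z', Fk ((p : ℝ) * q) z z' ∂γ) ∂γ) ^ (1 / (p : ℝ)))) :=
    (ENNReal.continuous_rpow_const.tendsto _).comp h
  have hGW : (GW ((p : ℝ) * q) (μ.map Prod.fst) (ν.map Prod.fst)) ^ q
      = (⨅ γ ∈ {γ : Measure (X × Y) |
          γ.map Prod.fst = μ.map Prod.fst ∧ γ.map Prod.snd = ν.map Prod.fst},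
        ∫⁻ z, (∫⁻ z', Fk ((p : ℝ) * q) z z' ∂γ) ∂γ) ^ (1 / (p : ℝ)) := by
    have harg : 1 / ((p : ℝ) * q) * q = 1 / (p : ℝ) := by
      field_simp
    unfold GW
    rw [← ENNReal.rpow_mul, harg]
    rfl
  rw [hGW]
  exact h2


end
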